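/- Let m_n denote the number of independent dominating sets of the meta-chain hexagonal cactus M_n, and set m_0 = 1 (the one-vertex graph M_0 has exactly one maximal independent set). Then m_1 = 5, m_2 = 19, and for every n ≥ 3, m_n = 3m_{n-1} + m_{n-2} + 2m_{n-3}. -/

import Mathlib

/-- `S` is an independent dominating set of `G`: pairwise non-adjacent, and every
vertex outside `S` has a neighbour in `S`. -/
def IsIndepDomSet {V : Type*} (G : SimpleGraph V) (S : Finset V) : Prop :=
  (∀ v ∈ S, ∀ w ∈ S, ¬ G.Adj v w) ∧ ∀ v, v ∉ S → ∃ w ∈ S, G.Adj v w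

/-- The meta-chain hexagonal cactus `M n`: `Sum.inl i` is the cut vertex `x i`
(`0 ≤ i ≤ n`) and `Sum.inr (k, t)` for `t = 0, 1, 2, 3` is `a (k+1)`, `b (k+1)`,
`c (k+1)`, `d (k+1)` respectively (`0 ≤ k ≤ n-1`); the `i`-th hexagon
(`1 ≤ i ≤ n`) is the six-cycle `x (i-1) – a i – x i – b i – c i – d i – x (i-1)`. -/
def metaHex (n : ℕ) : SimpleGraph (Fin (n + 1) ⊕ Fin n × Fin 4) :=
  SimpleGraph.fromRel fun p q =>
    match p, q with
    | Sum.inl i, Sum.inr (k, t) =>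
        ((i : ℕ) = (k : ℕ) ∧ (t = 0 ∨ t = 3)) ∨
          ((i : ℕ) = (k : ℕ) + 1 ∧ (t = 0 ∨ t = 1))
    | Sum.inr (k, t), Sum.inr (k', t') =>
        k = k' ∧ ((t = 1 ∧ t' = 2) ∨ (t = 2 ∧ t' = 3))
    | _, _ => False

/-- The number of independent dominating sets of the meta-chain hexagonal cactus `M n`. -/
noncomputable def numIDSMetaHex (n : ℕ) : ℕ :=
  Nat.card {S : Finset (Fin (n + 1) ⊕ Fin n × Fin 4) // IsIndepDomSet (metaHex n) S}

open Sum Finset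

namespace MHXproof

lemma adj_inl_inl {n : ℕ} {i j : Fin (n+1)} : ¬ (metaHex n).Adj (inl i) (inl j) := by
  simp [metaHex, SimpleGraph.fromRel_adj]

lemma adj_inl_inr {n : ℕ} {i : Fin (n+1)} {k : Fin n} {t : Fin 4} :
    (metaHex n).Adj (inl i) (inr (k, t)) ↔
      ((i : ℕ) = (k : ℕ) ∧ (t = 0 ∨ t = 3)) ∨ ((i : ℕ) = (k : ℕ) + 1 ∧ (t = 0 ∨ t = 1)) := by
  simp [metaHex, SimpleGraph.fromRel_adj]

lemma adj_inr_inr {n : ℕ} {k k' : Fin n} {t t' : Fin 4} :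
    (metaHex n).Adj (inr (k, t)) (inr (k', t')) ↔
      k = k' ∧ ((t = 1 ∧ t' = 2) ∨ (t = 2 ∧ t' = 3) ∨ (t' = 1 ∧ t = 2) ∨ (t' = 2 ∧ t = 3)) := by
  constructor
  · rintro ⟨hne, h | h⟩
    · exact ⟨h.1, by tauto⟩
    · exact ⟨h.1.symm, by tauto⟩
  · rintro ⟨rfl, h⟩
    refine ⟨by rintro h'; injection h'; simp_all; omega, ?_⟩
    rcases h with ⟨rfl, rfl⟩ | ⟨rfl, rfl⟩ | ⟨rfl, rfl⟩ | ⟨rfl, rfl⟩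
    · exact Or.inl ⟨rfl, by tauto⟩
    · exact Or.inl ⟨rfl, by tauto⟩
    · exact Or.inr ⟨rfl, by tauto⟩
    · exact Or.inr ⟨rfl, by tauto⟩

/-- independence + internal domination conditions within one hexagon:
`x`,`y` membership of the two cut vertices, `h 0..3` of `a,b,c,d`. -/
def hexOK (x y : Bool) (h : Fin 4 → Bool) : Bool :=
  !(x && h 0) && !(h 0 && y) && !(y && h 1) && !(h 1 && h 2) && !(h 2 && h 3) && !(h 3 && x) &&
  (h 0 || x || y) && (h 1 || y || h 2) && (h 2 || h 1 || h 3) && (h 3 || h 2 || x)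

variable {n : ℕ}

def ind (g : Fin (n+1) → Bool) (h : Fin n → Fin 4 → Bool)
    (p : Fin (n+1) ⊕ Fin n × Fin 4) : Bool :=
  p.elim g fun q => h q.1 q.2

def toFinset (g : Fin (n+1) → Bool) (h : Fin n → Fin 4 → Bool) :
    Finset (Fin (n+1) ⊕ Fin n × Fin 4) :=
  univ.filter fun p => ind g h p = true

@[simp] lemma mem_toFinset {g h p} : p ∈ toFinset (n := n) g h ↔ ind g h p = true := by
  simp [toFinset]

@[simp] lemma ind_inl {g h i} : ind (n := n) g h (inl i) = g i := rfl
@[simp] lemma ind_inr {g h k t} : ind (n := n) g h (inr (k, t)) = h k t := rfl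

def R (g : Fin (n+1) → Bool) (h : Fin n → Fin 4 → Bool) : Prop :=
  (∀ k : Fin n, hexOK (g k.castSucc) (g k.succ) (h k) = true) ∧
  ∀ i : Fin (n+1), g i = true ∨
    ∃ k : Fin n, (k.castSucc = i ∧ (h k 0 || h k 3) = true) ∨
      (k.succ = i ∧ (h k 0 || h k 1) = true)

lemma ids_iff_R (g : Fin (n+1) → Bool) (h : Fin n → Fin 4 → Bool) :
    IsIndepDomSet (metaHex n) (toFinset g h) ↔ R g h := by
  constructor
  · rintro ⟨hind, hdom⟩
    constructor
    · intro k
      have e1 : ¬(g k.castSucc = true ∧ h k 0 = true) := by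
        rintro ⟨h1, h2⟩
        exact hind (inl k.castSucc) (by simp [h1]) (inr (k, 0)) (by simp [h2]) (adj_inl_inr.2 (Or.inl ⟨by simp, Or.inl rfl⟩))
      have e2 : ¬(h k 0 = true ∧ g k.succ = true) := by
        rintro ⟨h1, h2⟩
        exact hind (inl k.succ) (by simp [h2]) (inr (k, 0)) (by simp [h1]) (adj_inl_inr.2 (Or.inr ⟨by simp, Or.inl rfl⟩))
      have e3 : ¬(g k.succ = true ∧ h k 1 = true) := by
        rintro ⟨h1, h2⟩
        exact hind (inl k.succ) (by simp [h1]) (inr (k, 1)) (by simp [h2]) (adj_inl_inr.2 (Or.inr ⟨by simp, Or.inr rfl⟩))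
      have e4 : ¬(h k 1 = true ∧ h k 2 = true) := by
        rintro ⟨h1, h2⟩
        exact hind (inr (k, 1)) (by simp [h1]) (inr (k, 2)) (by simp [h2]) (adj_inr_inr.2 ⟨rfl, by tauto⟩)
      have e5 : ¬(h k 2 = true ∧ h k 3 = true) := by
        rintro ⟨h1, h2⟩
        exact hind (inr (k, 2)) (by simp [h1]) (inr (k, 3)) (by simp [h2]) (adj_inr_inr.2 ⟨rfl, by tauto⟩)
      have e6 : ¬(h k 3 = true ∧ g k.castSucc = true) := by
        rintro ⟨h1, h2⟩
        exact hind (inl k.castSucc) (by simp [h2]) (inr (k, 3)) (by simp [h1]) (adj_inl_inr.2 (Or.inl ⟨by simp, Or.inr rfl⟩))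
      have d1 : h k 0 = true ∨ g k.castSucc = true ∨ g k.succ = true := by
        by_cases hc : h k 0 = true
        · exact Or.inl hc
        · obtain ⟨w, hw, hadj⟩ := hdom (inr (k, 0)) (by simpa using hc)
          right
          rcases w with i | ⟨k', t'⟩
          · rw [(metaHex n).adj_comm, adj_inl_inr] at hadj
            rcases hadj with ⟨hik, _⟩ | ⟨hik, _⟩
            · left
              have : i = k.castSucc := Fin.ext (by simpa using hik)
              subst this; simpa using hw
            · right
              have : i = k.succ := Fin.ext (by simpa using hik)
              subst this; simpa using hw
          · rw [adj_inr_inr] at hadj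
            rcases hadj with ⟨rfl, hx⟩
            rcases hx with ⟨h', _⟩ | ⟨h', _⟩ | ⟨_, h'⟩ | ⟨_, h'⟩ <;> exact absurd h' (by decide)
      have d2 : h k 1 = true ∨ g k.succ = true ∨ h k 2 = true := by
        by_cases hc : h k 1 = true
        · exact Or.inl hc
        · obtain ⟨w, hw, hadj⟩ := hdom (inr (k, 1)) (by simpa using hc)
          right
          rcases w with i | ⟨k', t'⟩
          · rw [(metaHex n).adj_comm, adj_inl_inr] at hadj
            rcases hadj with ⟨hik, ht⟩ | ⟨hik, ht⟩
            · exfalso; revert ht; decide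
            · left
              have : i = k.succ := Fin.ext (by simpa using hik)
              subst this; simpa using hw
          · rw [adj_inr_inr] at hadj
            rcases hadj with ⟨rfl, hx⟩
            rcases hx with ⟨_, rfl⟩ | ⟨h', _⟩ | ⟨_, h'⟩ | ⟨_, h'⟩ <;>
              first
                | (right; simpa using hw)
                | exact absurd h' (by decide)
      have d3 : h k 2 = true ∨ h k 1 = true ∨ h k 3 = true := by
        by_cases hc : h k 2 = true
        · exact Or.inl hc
        · obtain ⟨w, hw, hadj⟩ := hdom (inr (k, 2)) (by simpa using hc)
          right
          rcases w with i | ⟨k', t'⟩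
          · rw [(metaHex n).adj_comm, adj_inl_inr] at hadj
            rcases hadj with ⟨hik, ht⟩ | ⟨hik, ht⟩ <;> (exfalso; revert ht; decide)
          · rw [adj_inr_inr] at hadj
            rcases hadj with ⟨rfl, hx⟩
            rcases hx with ⟨h', _⟩ | ⟨_, rfl⟩ | ⟨rfl, _⟩ | ⟨rfl, h'⟩
            · exact absurd h' (by decide)
            · right; simpa using hw
            · left; simpa using hw
            · exact absurd h' (by decide)
      have d4 : h k 3 = true ∨ h k 2 = true ∨ g k.castSucc = true := by
        by_cases hc : h k 3 = true
        · exact Or.inl hc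
        · obtain ⟨w, hw, hadj⟩ := hdom (inr (k, 3)) (by simpa using hc)
          right
          rcases w with i | ⟨k', t'⟩
          · rw [(metaHex n).adj_comm, adj_inl_inr] at hadj
            rcases hadj with ⟨hik, ht⟩ | ⟨hik, ht⟩
            · right
              have : i = k.castSucc := Fin.ext (by simpa using hik)
              subst this; simpa using hw
            · exfalso; revert ht; decide
          · rw [adj_inr_inr] at hadj
            rcases hadj with ⟨rfl, hx⟩
            rcases hx with ⟨h', _⟩ | ⟨h', _⟩ | ⟨_, h'⟩ | ⟨rfl, _⟩
            · exact absurd h' (by decide)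
            · exact absurd h' (by decide)
            · exact absurd h' (by decide)
            · left; simpa using hw
      clear hind hdom
      rcases Bool.eq_false_or_eq_true (h k 0) with hx0 | hx0 <;>
        rcases Bool.eq_false_or_eq_true (h k 1) with hx1 | hx1 <;>
        rcases Bool.eq_false_or_eq_true (h k 2) with hx2 | hx2 <;>
        rcases Bool.eq_false_or_eq_true (h k 3) with hx3 | hx3 <;>
        rcases Bool.eq_false_or_eq_true (g k.castSucc) with hgc | hgc <;>
        rcases Bool.eq_false_or_eq_true (g k.succ) with hgs | hgs <;>
        simp_all [hexOK]
    · intro i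
      by_cases hg : g i = true
      · exact Or.inl hg
      · right
        obtain ⟨w, hw, hadj⟩ := hdom (inl i) (by simpa using hg)
        rcases w with j | ⟨k, t⟩
        · exact absurd hadj adj_inl_inl
        · rw [adj_inl_inr] at hadj
          refine ⟨k, ?_⟩
          rcases hadj with ⟨hik, ht⟩ | ⟨hik, ht⟩
          · left
            refine ⟨Fin.ext (by simpa using hik.symm), ?_⟩
            rcases ht with rfl | rfl <;> simp_all
          · right
            refine ⟨Fin.ext (by simpa using hik.symm), ?_⟩
            rcases ht with rfl | rfl <;> simp_all
  · rintro ⟨hhex, hdom⟩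
    constructor
    · rintro v hv w hw hadj
      rcases v with i | ⟨k, t⟩ <;> rcases w with j | ⟨k', t'⟩
      · exact adj_inl_inl hadj
      · rw [adj_inl_inr] at hadj
        have := hhex k'
        simp only [mem_toFinset, ind_inl, ind_inr] at hv hw
        rcases hadj with ⟨hik, rfl | rfl⟩ | ⟨hik, rfl | rfl⟩ <;>
          [ (have : i = k'.castSucc := Fin.ext (by simpa using hik));
            (have : i = k'.castSucc := Fin.ext (by simpa using hik));
            (have : i = k'.succ := Fin.ext (by simpa using hik));
            (have : i = k'.succ := Fin.ext (by simpa using hik))] <;>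
          subst this <;> simp_all [hexOK]
      · rw [(metaHex n).adj_comm, adj_inl_inr] at hadj
        have := hhex k
        simp only [mem_toFinset, ind_inl, ind_inr] at hv hw
        rcases hadj with ⟨hik, rfl | rfl⟩ | ⟨hik, rfl | rfl⟩ <;>
          [ (have : j = k.castSucc := Fin.ext (by simpa using hik));
            (have : j = k.castSucc := Fin.ext (by simpa using hik));
            (have : j = k.succ := Fin.ext (by simpa using hik));
            (have : j = k.succ := Fin.ext (by simpa using hik))] <;>
          subst this <;> simp_all [hexOK]
      · rw [adj_inr_inr] at hadj
        obtain ⟨rfl, hts⟩ := hadj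
        have := hhex k
        simp only [mem_toFinset, ind_inr] at hv hw
        rcases hts with ⟨rfl, rfl⟩ | ⟨rfl, rfl⟩ | ⟨rfl, rfl⟩ | ⟨rfl, rfl⟩ <;>
          simp_all [hexOK]
    · intro v hv
      rcases v with i | ⟨k, t⟩
      · simp only [mem_toFinset, ind_inl] at hv
        rcases hdom i with hg | ⟨k, ⟨hk, hb⟩ | ⟨hk, hb⟩⟩
        · exact absurd hg hv
        · rcases Bool.or_eq_true_iff.1 hb with hb | hb
          · exact ⟨inr (k, 0), by simpa using hb,
              adj_inl_inr.2 (Or.inl ⟨by rw [← hk]; simp, Or.inl rfl⟩)⟩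
          · exact ⟨inr (k, 3), by simpa using hb,
              adj_inl_inr.2 (Or.inl ⟨by rw [← hk]; simp, Or.inr rfl⟩)⟩
        · rcases Bool.or_eq_true_iff.1 hb with hb | hb
          · exact ⟨inr (k, 0), by simpa using hb,
              adj_inl_inr.2 (Or.inr ⟨by rw [← hk]; simp, Or.inl rfl⟩)⟩
          · exact ⟨inr (k, 1), by simpa using hb,
              adj_inl_inr.2 (Or.inr ⟨by rw [← hk]; simp, Or.inr rfl⟩)⟩
      · simp only [mem_toFinset, ind_inr] at hv
        have hx := hhex k
        simp only [hexOK, Bool.and_eq_true, Bool.not_eq_true', Bool.or_eq_true] at hx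
        obtain ⟨⟨⟨⟨⟨⟨⟨⟨⟨_, _⟩, _⟩, _⟩, _⟩, _⟩, da⟩, db⟩, dc⟩, dd⟩ := hx
        fin_cases t
        · rcases da with (ha | hx) | hy
          · exact absurd ha hv
          · exact ⟨inl k.castSucc, by simpa using hx,
              ((metaHex n).adj_comm _ _).1 (adj_inl_inr.2 (Or.inl ⟨by simp, Or.inl rfl⟩))⟩
          · exact ⟨inl k.succ, by simpa using hy,
              ((metaHex n).adj_comm _ _).1 (adj_inl_inr.2 (Or.inr ⟨by simp, Or.inl rfl⟩))⟩
        · rcases db with (hb | hy) | hc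
          · exact absurd hb hv
          · exact ⟨inl k.succ, by simpa using hy,
              ((metaHex n).adj_comm _ _).1 (adj_inl_inr.2 (Or.inr ⟨by simp, Or.inr rfl⟩))⟩
          · exact ⟨inr (k, 2), by simpa using hc, adj_inr_inr.2 ⟨rfl, by decide⟩⟩
        · rcases dc with (hc | hb) | hd
          · exact absurd hc hv
          · exact ⟨inr (k, 1), by simpa using hb, adj_inr_inr.2 ⟨rfl, by decide⟩⟩
          · exact ⟨inr (k, 3), by simpa using hd, adj_inr_inr.2 ⟨rfl, by decide⟩⟩
        · rcases dd with (hd | hc) | hx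
          · exact absurd hd hv
          · exact ⟨inr (k, 2), by simpa using hc, adj_inr_inr.2 ⟨rfl, by decide⟩⟩
          · exact ⟨inl k.castSucc, by simpa using hx,
              ((metaHex n).adj_comm _ _).1 (adj_inl_inr.2 (Or.inl ⟨by simp, Or.inr rfl⟩))⟩

def domL (h : Fin n → Fin 4 → Bool) (i : Fin (n+1)) : Prop :=
  ∃ k : Fin n, k.succ = i ∧ (h k 0 || h k 1) = true

instance {h : Fin n → Fin 4 → Bool} {i} : Decidable (domL h i) := by
  unfold domL; infer_instance

def st (g : Fin (n+1) → Bool) (h : Fin n → Fin 4 → Bool) (i : Fin (n+1)) : Fin 3 :=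
  if g i = true then 0 else if domL h i then 1 else 2

instance {g : Fin (n+1) → Bool} {h i} {s : Fin 3} : Decidable (st g h i = s) := by
  unfold st; infer_instance

def Q' (g : Fin (n+1) → Bool) (h : Fin n → Fin 4 → Bool) : Prop :=
  ∀ k : Fin n, hexOK (g k.castSucc) (g k.succ) (h k) = true ∧
    (st g h k.castSucc = 2 → (h k 0 || h k 3) = true)

instance {g : Fin (n+1) → Bool} {h} : Decidable (Q' g h) := by
  unfold Q'; infer_instance

lemma forall_split {p : Fin (n+1) → Prop} :
    (∀ i, p i) ↔ (∀ k : Fin n, p k.castSucc) ∧ p (Fin.last n) :=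
  ⟨fun H => ⟨fun k => H _, H _⟩, fun ⟨h1, h2⟩ i => Fin.lastCases h2 h1 i⟩

lemma domcond_iff (g : Fin (n+1) → Bool) (h : Fin n → Fin 4 → Bool) (i : Fin (n+1)) :
    (g i = true ∨
      ∃ k : Fin n, (k.castSucc = i ∧ (h k 0 || h k 3) = true) ∨
        (k.succ = i ∧ (h k 0 || h k 1) = true)) ↔
    (st g h i = 2 → ∃ k : Fin n, k.castSucc = i ∧ (h k 0 || h k 3) = true) := by
  unfold st
  split_ifs with h1 h2
  · simp [h1]
  · constructor
    · intro _ h'; exact absurd h' (by decide)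
    · intro _
      obtain ⟨k, hk, hb⟩ := h2
      exact Or.inr ⟨k, Or.inr ⟨hk, hb⟩⟩
  · constructor
    · rintro (hg | ⟨k, hk | hk⟩) _
      · exact absurd hg h1
      · exact ⟨k, hk⟩
      · exact absurd ⟨k, hk⟩ h2
    · intro H
      obtain ⟨k, hk⟩ := H rfl
      exact Or.inr ⟨k, Or.inl hk⟩

lemma R_iff (g : Fin (n+1) → Bool) (h : Fin n → Fin 4 → Bool) :
    R g h ↔ Q' g h ∧ st g h (Fin.last n) ≠ 2 := by
  constructor
  · rintro ⟨hhex, hdom⟩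
    have hdom' : ∀ i, st g h i = 2 → ∃ k : Fin n, k.castSucc = i ∧ (h k 0 || h k 3) = true :=
      fun i => (domcond_iff g h i).1 (hdom i)
    constructor
    · intro k
      refine ⟨hhex k, fun hst => ?_⟩
      obtain ⟨k', hk', hb⟩ := hdom' k.castSucc hst
      rwa [Fin.castSucc_inj.1 hk'] at hb
    · intro hst
      obtain ⟨k, hk, _⟩ := hdom' (Fin.last n) hst
      exact absurd hk (Fin.ne_of_lt (Fin.castSucc_lt_last k))
  · rintro ⟨hq, hlast⟩
    refine ⟨fun k => (hq k).1, fun i => (domcond_iff g h i).2 ?_⟩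
    induction i using Fin.lastCases with
    | last => exact fun hst => absurd hst hlast
    | cast k => exact fun hst => ⟨k, rfl, (hq k).2 hst⟩

def w : Fin 3 → Fin 3 → ℕ := ![![1,1,1], ![2,2,0], ![1,2,0]]

def cnt : ℕ → Fin 3 → ℕ
  | 0, σ => if σ = 1 then 0 else 1
  | n+1, σ => ∑ τ : Fin 3, cnt n τ * w τ σ

def nextSt (hk : Fin 4 → Bool) (y : Bool) : Fin 3 :=
  if y then 0 else if hk 0 || hk 1 then 1 else 2

def stepTo (τ : Fin 3) (hk : Fin 4 → Bool) (σ : Fin 3) : Prop :=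
  hexOK (decide (τ = 0)) (decide (σ = 0)) hk = true ∧
  (τ = 2 → (hk 0 || hk 3) = true) ∧
  nextSt hk (decide (σ = 0)) = σ

instance {τ hk σ} : Decidable (stepTo τ hk σ) := by unfold stepTo; infer_instance

lemma cardw : ∀ τ σ : Fin 3, Fintype.card {hk : Fin 4 → Bool // stepTo τ hk σ} = w τ σ := by
  decide

lemma y_eq {hk : Fin 4 → Bool} {y : Bool} {σ : Fin 3} (h : nextSt hk y = σ) :
    y = decide (σ = 0) := by
  cases y
  · rw [show nextSt hk false = if hk 0 || hk 1 then 1 else 2 from rfl] at h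
    split_ifs at h <;> subst h <;> decide
  · rw [show nextSt hk true = 0 from rfl] at h
    subst h; decide


lemma bool_eq_decide {b : Bool} {p : Prop} [Decidable p] (h : b = true ↔ p) :
    b = decide p := by
  by_cases hp : p
  · simp [hp, h.2 hp]
  · have hb : b = false := by
      cases hb : b
      · rfl
      · exact absurd (h.1 hb) hp
    simp [hb, hp]

def initB (g : Fin (n+2) → Bool) : Fin (n+1) → Bool := fun i => g i.castSucc
def snocB (g : Fin (n+1) → Bool) (b : Bool) : Fin (n+2) → Bool := Fin.snoc g b
def initH (h : Fin (n+1) → Fin 4 → Bool) : Fin n → Fin 4 → Bool := fun k => h k.castSucc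
def snocH (h : Fin n → Fin 4 → Bool) (hk : Fin 4 → Bool) : Fin (n+1) → Fin 4 → Bool :=
  Fin.snoc h hk

@[simp] lemma snocB_castSucc {g : Fin (n+1) → Bool} {b : Bool} {i : Fin (n+1)} :
    snocB g b i.castSucc = g i := Fin.snoc_castSucc ..
@[simp] lemma snocB_last {g : Fin (n+1) → Bool} {b : Bool} :
    snocB g b (Fin.last (n+1)) = b := Fin.snoc_last ..
@[simp] lemma snocH_castSucc {h : Fin n → Fin 4 → Bool} {hk : Fin 4 → Bool} {k : Fin n} :
    snocH h hk k.castSucc = h k := Fin.snoc_castSucc ..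
@[simp] lemma snocH_last {h : Fin n → Fin 4 → Bool} {hk : Fin 4 → Bool} :
    snocH h hk (Fin.last n) = hk := Fin.snoc_last ..
@[simp] lemma initB_snocB {g : Fin (n+1) → Bool} {b : Bool} : initB (snocB g b) = g := by
  funext i; simp [initB, snocB]
@[simp] lemma initH_snocH {h : Fin n → Fin 4 → Bool} {hk : Fin 4 → Bool} :
    initH (snocH h hk) = h := by
  funext k; simp [initH, snocH]
lemma snocB_init_self (g : Fin (n+2) → Bool) : snocB (initB g) (g (Fin.last (n+1))) = g := by
  funext i; exact congrFun (Fin.snoc_init_self g) i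
lemma snocH_init_self (h : Fin (n+1) → Fin 4 → Bool) :
    snocH (initH h) (h (Fin.last n)) = h := by
  funext k; exact congrFun (Fin.snoc_init_self h) k

lemma st_eq_zero_iff {g : Fin (n+1) → Bool} {h : Fin n → Fin 4 → Bool} {i} :
    st g h i = 0 ↔ g i = true := by
  unfold st
  split_ifs with h1 h2
  · simp [h1]
  · constructor
    · intro hx; exact absurd hx (by decide)
    · intro hx; exact absurd hx h1
  · constructor
    · intro hx; exact absurd hx (by decide)
    · intro hx; exact absurd hx h1

lemma g_eq (g : Fin (n+1) → Bool) (h : Fin n → Fin 4 → Bool) (i : Fin (n+1)) :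
    g i = decide (st g h i = 0) := by
  by_cases h1 : g i = true
  · rw [h1]; symm; rw [decide_eq_true_eq]; exact st_eq_zero_iff.2 h1
  · have h2 : g i = false := by simpa using h1
    rw [h2]; symm; rw [decide_eq_false_iff_not]
    rw [st_eq_zero_iff]; exact h1

lemma domL_init (h : Fin (n+1) → Fin 4 → Bool) (i : Fin (n+1)) :
    domL (initH h) i ↔ domL h i.castSucc := by
  constructor
  · rintro ⟨k, hk, hb⟩
    exact ⟨k.castSucc, by rw [Fin.succ_castSucc, hk], hb⟩
  · rintro ⟨k, hk, hb⟩
    have hlt : (k : ℕ) < n := by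
      have := congrArg Fin.val hk
      simp [Fin.val_succ] at this
      omega
    refine ⟨⟨(k : ℕ), hlt⟩, ?_, ?_⟩
    · apply Fin.ext
      have := congrArg Fin.val hk
      simpa using this
    · have : (⟨(k : ℕ), hlt⟩ : Fin n).castSucc = k := by apply Fin.ext; simp
      simpa [Fin.init, initH, this] using hb

lemma st_init (g : Fin (n+2) → Bool) (h : Fin (n+1) → Fin 4 → Bool) (i : Fin (n+1)) :
    st (initB g) (initH h) i = st g h i.castSucc := by
  unfold st
  have h1 : initB g i = g i.castSucc := rfl
  rw [h1]
  by_cases hg : g i.castSucc = true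
  · rw [if_pos hg, if_pos hg]
  · rw [if_neg hg, if_neg hg]
    by_cases hd : domL (initH h) i
    · rw [if_pos hd, if_pos ((domL_init h i).1 hd)]
    · rw [if_neg hd, if_neg (fun hc => hd ((domL_init h i).2 hc))]

lemma domL_last (h : Fin (n+1) → Fin 4 → Bool) :
    domL h (Fin.last (n+1)) ↔ (h (Fin.last n) 0 || h (Fin.last n) 1) = true := by
  constructor
  · rintro ⟨k, hk, hb⟩
    have : k = Fin.last n := by
      apply Fin.ext
      have := congrArg Fin.val hk
      simpa using this
    subst this; exact hb
  · intro hb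
    exact ⟨Fin.last n, Fin.succ_last n, hb⟩

lemma st_last_eq (g : Fin (n+2) → Bool) (h : Fin (n+1) → Fin 4 → Bool) :
    st g h (Fin.last (n+1)) = nextSt (h (Fin.last n)) (g (Fin.last (n+1))) := by
  unfold st nextSt
  by_cases h1 : g (Fin.last (n+1)) = true
  · rw [if_pos h1, h1, if_pos rfl]
  · have hg : g (Fin.last (n+1)) = false := by simpa using h1
    by_cases hd : domL h (Fin.last (n+1))
    · rw [if_neg h1, if_pos hd, hg, if_neg (show ¬(false = true) by simp),
        if_pos ((domL_last h).1 hd)]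
    · rw [if_neg h1, if_neg hd, hg, if_neg (show ¬(false = true) by simp),
        if_neg (fun hc => hd ((domL_last h).2 hc))]

lemma st_snoc (g : Fin (n+1) → Bool) (b : Bool) (h : Fin n → Fin 4 → Bool)
    (hk : Fin 4 → Bool) (i : Fin (n+1)) :
    st (snocB g b) (snocH h hk) i.castSucc = st g h i := by
  rw [← st_init, initB_snocB, initH_snocH]

abbrev Cfg (n : ℕ) := (Fin (n+1) → Bool) × (Fin n → Fin 4 → Bool)

lemma fwd_pf1 (σ τ : Fin 3) (gh : Cfg (n+1))
    (hx : (Q' gh.1 gh.2 ∧ st gh.1 gh.2 (Fin.last (n+1)) = σ) ∧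
      st (initB gh.1) (initH gh.2) (Fin.last n) = τ) :
    Q' (initB gh.1) (initH gh.2) ∧
      st (initB gh.1) (initH gh.2) (Fin.last n) = τ := by
  obtain ⟨⟨hq, hlast⟩, hτ⟩ := hx
  refine ⟨fun k => ⟨?_, ?_⟩, hτ⟩
  · show hexOK (gh.1 k.castSucc.castSucc) (gh.1 k.succ.castSucc) (gh.2 k.castSucc) = true
    rw [← Fin.succ_castSucc]
    exact (hq k.castSucc).1
  · intro h2
    rw [st_init] at h2
    exact (hq k.castSucc).2 h2

lemma fwd_pf2 (σ τ : Fin 3) (gh : Cfg (n+1))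
    (hx : (Q' gh.1 gh.2 ∧ st gh.1 gh.2 (Fin.last (n+1)) = σ) ∧
      st (initB gh.1) (initH gh.2) (Fin.last n) = τ) :
    stepTo τ (gh.2 (Fin.last n)) σ := by
  obtain ⟨⟨hq, hlast⟩, hτ⟩ := hx
  have hgl : gh.1 (Fin.last n).castSucc = decide (τ = 0) := by
    apply bool_eq_decide
    rw [← hτ, st_init (g := gh.1) (h := gh.2), st_eq_zero_iff]
  have hgr : gh.1 (Fin.last (n+1)) = decide (σ = 0) := by
    rw [st_last_eq] at hlast
    exact y_eq hlast
  refine ⟨?_, ?_, ?_⟩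
  · rw [← hgl, ← hgr, ← Fin.succ_last]
    exact (hq (Fin.last n)).1
  · intro h2
    apply (hq (Fin.last n)).2
    rw [← st_init, hτ, h2]
  · rw [← hgr, ← st_last_eq]
    exact hlast

lemma bwd_pf (σ τ : Fin 3) (gh : Cfg n)
    (hp : Q' gh.1 gh.2 ∧ st gh.1 gh.2 (Fin.last n) = τ)
    (hk : Fin 4 → Bool) (hs : stepTo τ hk σ) :
    (Q' (snocB gh.1 (decide (σ = 0))) (snocH gh.2 hk) ∧
      st (snocB gh.1 (decide (σ = 0))) (snocH gh.2 hk) (Fin.last (n+1)) = σ) ∧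
    st (initB (snocB gh.1 (decide (σ = 0)))) (initH (snocH gh.2 hk))
      (Fin.last n) = τ := by
  obtain ⟨hq, hτ⟩ := hp
  obtain ⟨hs1, hs2, hs3⟩ := hs
  have hgτ : gh.1 (Fin.last n) = decide (τ = 0) := by
    apply bool_eq_decide
    rw [← hτ, st_eq_zero_iff]
  refine ⟨⟨?_, ?_⟩, ?_⟩
  · intro k
    induction k using Fin.lastCases with
    | last =>
      constructor
      · rw [snocB_castSucc, Fin.succ_last, snocB_last, snocH_last, hgτ]
        exact hs1
      · intro h2
        rw [st_snoc, hτ] at h2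
        rw [snocH_last]
        exact hs2 h2
    | cast j =>
      constructor
      · rw [Fin.succ_castSucc, snocB_castSucc, snocB_castSucc, snocH_castSucc]
        exact (hq j).1
      · intro h2
        rw [st_snoc] at h2
        rw [snocH_castSucc]
        exact (hq j).2 h2
  · rw [st_last_eq, snocB_last, snocH_last]
    exact hs3
  · rw [initB_snocB, initH_snocH]
    exact hτ

def peel (σ τ : Fin 3) :
    {gh : Cfg (n+1) // (Q' gh.1 gh.2 ∧ st gh.1 gh.2 (Fin.last (n+1)) = σ) ∧
        st (initB gh.1) (initH gh.2) (Fin.last n) = τ} ≃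
      {gh : Cfg n // Q' gh.1 gh.2 ∧ st gh.1 gh.2 (Fin.last n) = τ} ×
        {hk : Fin 4 → Bool // stepTo τ hk σ} where
  toFun x := (⟨(initB x.1.1, initH x.1.2), fwd_pf1 σ τ x.1 x.2⟩,
    ⟨x.1.2 (Fin.last n), fwd_pf2 σ τ x.1 x.2⟩)
  invFun y := ⟨(snocB y.1.1.1 (decide (σ = 0)), snocH y.1.1.2 y.2.1),
    bwd_pf σ τ y.1.1 y.1.2 y.2.1 y.2.2⟩
  left_inv := by
    rintro ⟨⟨g, h⟩, ⟨⟨hq, hlast⟩, hτ⟩⟩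
    apply Subtype.ext
    have hb : g (Fin.last (n+1)) = decide (σ = 0) := by
      rw [st_last_eq] at hlast
      exact y_eq hlast
    show (snocB (initB g) (decide (σ = 0)), snocH (initH h) (h (Fin.last n)))
      = (g, h)
    rw [← hb, snocB_init_self, snocH_init_self]
  right_inv := by
    rintro ⟨⟨⟨g, h⟩, hp⟩, ⟨hk, hs⟩⟩
    refine Prod.ext ?_ ?_ <;> apply Subtype.ext
    · show (initB (snocB g (decide (σ = 0))), initH (snocH h hk)) = (g, h)
      rw [initB_snocB, initH_snocH]
    · show snocH h hk (Fin.last n) = hk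
      rw [snocH_last]

lemma card_chain (n : ℕ) (σ : Fin 3) :
    Fintype.card {gh : Cfg n // Q' gh.1 gh.2 ∧ st gh.1 gh.2 (Fin.last n) = σ} = cnt n σ := by
  induction n generalizing σ with
  | zero => revert σ; decide
  | succ n ih =>
    have key : ∀ τ : Fin 3,
        Fintype.card {gh : Cfg (n+1) // (Q' gh.1 gh.2 ∧ st gh.1 gh.2 (Fin.last (n+1)) = σ) ∧
          st (initB gh.1) (initH gh.2) (Fin.last n) = τ} = cnt n τ * w τ σ := by
      intro τ
      rw [Fintype.card_congr (peel σ τ), Fintype.card_prod, ih τ, cardw τ σ]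
    have step1 : Fintype.card
        {gh : Cfg (n+1) // Q' gh.1 gh.2 ∧ st gh.1 gh.2 (Fin.last (n+1)) = σ} =
        ∑ τ : Fin 3, Fintype.card
          {gh : Cfg (n+1) // (Q' gh.1 gh.2 ∧ st gh.1 gh.2 (Fin.last (n+1)) = σ) ∧
            st (initB gh.1) (initH gh.2) (Fin.last n) = τ} := by
      rw [Fintype.card_subtype]
      rw [Finset.card_eq_sum_card_fiberwise
        (f := fun gh : Cfg (n+1) => st (initB gh.1) (initH gh.2) (Fin.last n))
        (t := Finset.univ) (fun _ _ => Finset.mem_univ _)]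
      refine Finset.sum_congr rfl fun τ _ => ?_
      rw [Finset.filter_filter, Fintype.card_subtype]
      convert rfl
    rw [step1]
    simp only [key]
    rfl

def cfgEquiv (n : ℕ) : Cfg n ≃ Finset (Fin (n+1) ⊕ Fin n × Fin 4) where
  toFun gh := toFinset gh.1 gh.2
  invFun S := (fun i => decide (inl i ∈ S), fun k t => decide (inr (k, t) ∈ S))
  left_inv := by
    rintro ⟨g, h⟩
    refine Prod.ext ?_ ?_
    · funext i; simp
    · funext k t; simp
  right_inv := by
    intro S
    ext p
    rcases p with i | ⟨k, t⟩ <;> simp [ind]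

lemma disj (n : ℕ) :
    Disjoint (fun gh : Cfg n => Q' gh.1 gh.2 ∧ st gh.1 gh.2 (Fin.last n) = 0)
      (fun gh : Cfg n => Q' gh.1 gh.2 ∧ st gh.1 gh.2 (Fin.last n) = 1) := by
  rw [Pi.disjoint_iff]
  intro gh
  rw [Prop.disjoint_iff]
  rintro ⟨⟨_, h0⟩, ⟨_, h1⟩⟩
  rw [h0] at h1
  exact absurd h1 (by decide)

lemma numIDS_eq (n : ℕ) : numIDSMetaHex n = cnt n 0 + cnt n 1 := by
  have e1 : {gh : Cfg n // R gh.1 gh.2} ≃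
      {S : Finset (Fin (n+1) ⊕ Fin n × Fin 4) // IsIndepDomSet (metaHex n) S} :=
    Equiv.subtypeEquiv (cfgEquiv n) fun gh => (ids_iff_R gh.1 gh.2).symm
  have e2 : {gh : Cfg n // R gh.1 gh.2} ≃
      {gh : Cfg n // (Q' gh.1 gh.2 ∧ st gh.1 gh.2 (Fin.last n) = 0) ∨
        (Q' gh.1 gh.2 ∧ st gh.1 gh.2 (Fin.last n) = 1)} := by
    apply Equiv.subtypeEquivRight
    intro gh
    rw [R_iff]
    have h3 : st gh.1 gh.2 (Fin.last n) ≠ 2 ↔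
        (st gh.1 gh.2 (Fin.last n) = 0 ∨ st gh.1 gh.2 (Fin.last n) = 1) :=
      (show ∀ s : Fin 3, s ≠ 2 ↔ (s = 0 ∨ s = 1) by decide) _
    rw [h3, and_or_left]
  rw [numIDSMetaHex, Nat.card_congr e1.symm, Nat.card_congr e2,
    Nat.card_eq_fintype_card, Fintype.card_subtype_or_disjoint _ _ (disj n),
    card_chain, card_chain]

@[simp] lemma w00 : w 0 0 = 1 := rfl
@[simp] lemma w01 : w 0 1 = 1 := rfl
@[simp] lemma w02 : w 0 2 = 1 := rfl
@[simp] lemma w10 : w 1 0 = 2 := rfl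
@[simp] lemma w11 : w 1 1 = 2 := rfl
@[simp] lemma w12 : w 1 2 = 0 := rfl
@[simp] lemma w20 : w 2 0 = 1 := rfl
@[simp] lemma w21 : w 2 1 = 2 := rfl
@[simp] lemma w22 : w 2 2 = 0 := rfl

lemma cnt_rec (n : ℕ) (σ : Fin 3) :
    cnt (n+3) σ = 3 * cnt (n+2) σ + cnt (n+1) σ + 2 * cnt n σ := by
  rcases (show ∀ s : Fin 3, s = 0 ∨ s = 1 ∨ s = 2 by decide) σ with rfl | rfl | rfl <;>
    simp only [cnt, Fin.sum_univ_three, w00, w01, w02, w10, w11, w12, w20, w21, w22] <;>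
    ring

end MHXproof

/-- `m 0 = 1`, `m 1 = 5`, `m 2 = 19`, and `m n = 3·m (n-1) + m (n-2) + 2·m (n-3)`
for `n ≥ 3`, where `m n` is the number of independent dominating sets of `M n`
(`M 0` being the one-vertex graph). -/
theorem numIDSMetaHex_recurrence :
    numIDSMetaHex 0 = 1 ∧ numIDSMetaHex 1 = 5 ∧ numIDSMetaHex 2 = 19 ∧
      ∀ n : ℕ, 3 ≤ n →
        numIDSMetaHex n =
          3 * numIDSMetaHex (n - 1) + numIDSMetaHex (n - 2) + 2 * numIDSMetaHex (n - 3) := by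
  refine ⟨?_, ?_, ?_, ?_⟩
  · rw [MHXproof.numIDS_eq]; decide
  · rw [MHXproof.numIDS_eq]; decide
  · rw [MHXproof.numIDS_eq]; decide
  · intro n hn
    obtain ⟨k, rfl⟩ : ∃ k, n = k + 3 := ⟨n - 3, by omega⟩
    have h1 : k + 3 - 1 = k + 2 := by omega
    have h2 : k + 3 - 2 = k + 1 := by omega
    have h3 : k + 3 - 3 = k := by omega
    rw [h1, h2, h3, MHXproof.numIDS_eq, MHXproof.numIDS_eq, MHXproof.numIDS_eq,
      MHXproof.numIDS_eq, MHXproof.cnt_rec k 0, MHXproof.cnt_rec k 1]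
    ring
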